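/- Let P₂(z) = 1 + (−A − 4B − 3C + D)z + (−AD + 2B² + 3BC − 3BD + C² − 3CD)z² and Q₂(z) = 1 + (−2A − 4B − 4C)z + (A² + 3AB + 3AC + 2B² + 6BC + 3C² − CD)z², and R₂ = P₂/Q₂. Then (1 − Az)R₂(z) − Bz²R₂′(z) − CzR₂²(z) − 1 − Dz = −(z⁵/Q₂²(z)) · (A + C + D) · ∏_{ℓ=1}^{2} (ℓAB + AC + CD + ℓ²B² + 2ℓBC + C²). -/

import Mathlib

open Polynomial Finset

set_option maxHeartbeats 1000000 in
/-- with
P₂(z) = 1 + (−A−4B−3C+D)z + (−AD+2B²+3BC−3BD+C²−3CD)z²,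
Q₂(z) = 1 + (−2A−4B−4C)z + (A²+3AB+3AC+2B²+6BC+3C²−CD)z², and R₂ = P₂/Q₂, one has
(1−Az)R₂ − Bz²R₂′ − CzR₂² − 1 − Dz
  = −(z⁵/Q₂²)(A+C+D)∏_{ℓ=1}^{2}(ℓAB+AC+CD+ℓ²B²+2ℓBC+C²),
as an identity of rational functions (R₂′ computed by the quotient rule). -/
theorem statement5 {K : Type*} [Field K] (A B C D : K) :
    let P : K[X] := Polynomial.C 1 + Polynomial.C (-A - 4 * B - 3 * C + D) * Polynomial.X +
      Polynomial.C (-A * D + 2 * B ^ 2 + 3 * B * C - 3 * B * D + C ^ 2 - 3 * C * D) *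
        Polynomial.X ^ 2
    let Q : K[X] := Polynomial.C 1 + Polynomial.C (-2 * A - 4 * B - 4 * C) * Polynomial.X +
      Polynomial.C (A ^ 2 + 3 * A * B + 3 * A * C + 2 * B ^ 2 + 6 * B * C + 3 * C ^ 2 -
        C * D) * Polynomial.X ^ 2
    let φ := algebraMap K[X] (RatFunc K)
    let R : RatFunc K := φ P / φ Q
    let R' : RatFunc K := φ (derivative P * Q - P * derivative Q) / (φ Q) ^ 2
    (1 - RatFunc.C A * RatFunc.X) * R - RatFunc.C B * RatFunc.X ^ 2 * R' -
        RatFunc.C C * RatFunc.X * R ^ 2 - 1 - RatFunc.C D * RatFunc.X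
      = -(RatFunc.X ^ 5 / (φ Q) ^ 2) *
          RatFunc.C ((A + C + D) *
            ∏ ℓ ∈ Icc (1 : ℕ) 2,
              ((ℓ : K) * A * B + A * C + C * D + (ℓ : K) ^ 2 * B ^ 2 +
                2 * (ℓ : K) * B * C + C ^ 2)) := by
  intro P Q φ R R'
  have hQ0 : Q ≠ 0 := fun h => by
    have := congrArg (fun p => Polynomial.coeff p 0) h
    simp [Q] at this
  have hQ : φ Q ≠ 0 := by
    simpa [φ] using (map_ne_zero_iff _ (IsFractionRing.injective K[X] (RatFunc K))).2 hQ0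
  have hnum : ((1 - Polynomial.C A * Polynomial.X) * (P * Q) -
      Polynomial.C B * Polynomial.X ^ 2 * (derivative P * Q - P * derivative Q) -
      Polynomial.C C * Polynomial.X * P ^ 2 - (1 + Polynomial.C D * Polynomial.X) * Q ^ 2 : K[X])
      = -(Polynomial.X ^ 5 * Polynomial.C ((A + C + D) *
          ((1 * A * B + A * C + C * D + 1 ^ 2 * B ^ 2 + 2 * 1 * B * C + C ^ 2) *
           (2 * A * B + A * C + C * D + 2 ^ 2 * B ^ 2 + 2 * 2 * B * C + C ^ 2)))) := by
    simp only [P, Q, derivative_add, derivative_mul, derivative_C, derivative_X, derivative_pow,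
      derivative_one]
    simp only [Nat.cast_ofNat, map_natCast, map_one, map_mul, map_add, map_sub, map_neg,
      map_pow, map_ofNat]
    push_cast
    ring
  have hN := congrArg φ hnum
  simp only [map_sub, map_add, map_mul, map_pow, map_one, map_neg, map_ofNat, φ,
    RatFunc.algebraMap_C, RatFunc.algebraMap_X] at hN
  rw [show Icc (1:ℕ) 2 = {1, 2} from rfl, Finset.prod_insert (by decide),
    Finset.prod_singleton]
  push_cast
  simp only [R, R']
  field_simp
  simp only [map_sub, map_add, map_mul, map_pow, map_one, map_neg, map_ofNat, φ,
    RatFunc.algebraMap_C, RatFunc.algebraMap_X]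
  linear_combination hN
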